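/- Let C_n be the number of comparisons used by randomized Quicksort on n distinct elements, with pivots chosen uniformly at random, satisfying C_0 = 0 and the distributional recurrence C_n = C_{U−1} + C'_{n−U} + n − 1 where U is uniform on {1,…,n} and C_{U−1}, C'_{n−U} are independent copies. Then Var(C_n) = 7n² − 4(n+1)²H_n^{(2)} − 2(n+1)H_n + 13n, where H_n is the n-th harmonic number and H_n^{(2)} the n-th harmonic number of order 2. -/

import Mathlib

open Finset

noncomputable def H (n : ℕ) : ℝ := ∑ i ∈ Finset.Icc 1 n, (1:ℝ)/i
noncomputable def H2 (n : ℕ) : ℝ := ∑ i ∈ Finset.Icc 1 n, (1:ℝ)/(i:ℝ)^2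
lemma H_zero : H 0 = 0 := by simp [H]
lemma H2_zero : H2 0 = 0 := by simp [H2]
lemma H_succ (n : ℕ) : H (n+1) = H n + 1/((n:ℝ)+1) := by
  rw [H, H, Finset.sum_Icc_succ_top (by omega)]; push_cast; ring
lemma H2_succ (n : ℕ) : H2 (n+1) = H2 n + 1/((n:ℝ)+1)^2 := by
  rw [H2, H2, Finset.sum_Icc_succ_top (by omega)]; push_cast; ring
lemma refl_range (F : ℕ → ℝ) (n : ℕ) :
    ∑ j ∈ range (n+1), F (n - j) = ∑ j ∈ range (n+1), F j := by
  have := Finset.sum_range_reflect F (n+1)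
  simpa using this
lemma icc_to_range (F : ℕ → ℝ) (n : ℕ) :
    ∑ k ∈ Icc 1 n, F k = ∑ j ∈ range n, F (j+1) := by
  rw [← Finset.Ico_add_one_right_eq_Icc, Finset.sum_Ico_eq_sum_range]
  simp [Nat.add_comm]

lemma sumK (n : ℕ) : ∑ k ∈ Icc 1 n, (1/((k:ℝ)*((n:ℝ)+1-k))) = 2*H n/((n:ℝ)+1) := by
  have hrefl : ∑ k ∈ Icc 1 n, (1:ℝ)/((n:ℝ)+1-k) = H n := by
    rw [H, icc_to_range, icc_to_range, ← Finset.sum_range_reflect (fun j => (1:ℝ)/(((j+1:ℕ)):ℝ)) n]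
    apply Finset.sum_congr rfl
    intro j hj
    simp only [Finset.mem_range] at hj
    have h2 : ((n-1-j:ℕ):ℝ) = (n:ℝ) - 1 - j := by
      have h3 : (1:ℕ) + j ≤ n := by omega
      push_cast [Nat.cast_sub (by omega : j ≤ n - 1), Nat.cast_sub (by omega : 1 ≤ n)]
      ring
    show (1:ℝ) / ((n:ℝ) + 1 - ((j+1:ℕ):ℝ)) = 1 / (((n-1-j)+1:ℕ):ℝ)
    push_cast [h2]
    ring_nf
  have hsplit : ∀ k ∈ Icc 1 n, (1/((k:ℝ)*((n:ℝ)+1-k)))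
      = (1/((n:ℝ)+1)) * ((1:ℝ)/k + (1:ℝ)/((n:ℝ)+1-k)) := by
    intro k hk
    simp only [Finset.mem_Icc] at hk
    have hk0 : (k:ℝ) ≠ 0 := Nat.cast_ne_zero.mpr (by omega)
    have hk1 : (n:ℝ)+1-k ≠ 0 := by
      have : (k:ℝ) ≤ n := by exact_mod_cast hk.2
      nlinarith
    field_simp
    ring
  rw [Finset.sum_congr rfl hsplit, ← Finset.mul_sum, Finset.sum_add_distrib, hrefl]
  have : (∑ k ∈ Icc 1 n, (1:ℝ)/k) = H n := rfl
  rw [this]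
  ring

lemma sumH (n : ℕ) : ∑ j ∈ range (n+1), H j = ((n:ℝ)+1)*H n - n := by
  induction n with
  | zero => simp [H_zero]
  | succ n ih => rw [Finset.sum_range_succ, ih, H_succ]; push_cast; field_simp; ring

lemma sumjH (n : ℕ) : ∑ j ∈ range (n+1), (j:ℝ)*H j
    = (n:ℝ)*((n:ℝ)+1)/2*H n - (n:ℝ)*((n:ℝ)-1)/4 := by
  induction n with
  | zero => simp [H_zero]
  | succ n ih => rw [Finset.sum_range_succ, ih, H_succ]; push_cast; field_simp; ring

lemma sumR (n : ℕ) : ∑ k ∈ Icc 1 n, H (n-k) * (1/(k:ℝ)) = (H n)^2 - H2 n := by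
  induction n with
  | zero => simp [H_zero, H2_zero]
  | succ n ih =>
    rw [Finset.sum_Icc_succ_top (by omega)]
    have hstep : ∀ k ∈ Icc 1 n, H (n+1-k) * (1/(k:ℝ))
        = H (n-k) * (1/(k:ℝ)) + (1/((n:ℝ)+1-k)) * (1/(k:ℝ)) := by
      intro k hk
      simp only [Finset.mem_Icc] at hk
      have h1 : n + 1 - k = (n - k) + 1 := by omega
      have h2 : ((n-k:ℕ):ℝ) = (n:ℝ) - k := by push_cast [Nat.cast_sub hk.2]; ring
      rw [h1, H_succ, h2]
      ring
    rw [Finset.sum_congr rfl hstep, Finset.sum_add_distrib, ih]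
    have hK : ∑ k ∈ Icc 1 n, (1/((n:ℝ)+1-k)) * (1/(k:ℝ)) = 2*H n/((n:ℝ)+1) := by
      rw [← sumK n]
      apply Finset.sum_congr rfl
      intro k hk
      rw [div_mul_div_comm, one_mul, mul_comm]
    rw [hK]
    simp only [Nat.sub_self, Nat.add_sub_cancel, H_succ, H2_succ, H_zero]
    push_cast
    have hne : (n:ℝ)+1 ≠ 0 := by positivity
    field_simp
    ring

lemma sumRrange (n : ℕ) : ∑ j ∈ range (n+1), H j * (1/((n:ℝ)+1-j)) = (H (n+1))^2 - H2 (n+1) := by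
  rw [← sumR (n+1), icc_to_range]
  rw [← refl_range (fun j => H j * (1/((n:ℝ)+1-(j:ℕ)))) n]
  apply Finset.sum_congr rfl
  intro j hj
  simp only [Finset.mem_range] at hj
  have hjn : j ≤ n := by omega
  have h1 : n + 1 - (j+1) = n - j := by omega
  have h2 : ((n-j:ℕ):ℝ) = (n:ℝ) - j := by push_cast [Nat.cast_sub hjn]; ring
  show H (n-j) * (1/((n:ℝ)+1-((n-j:ℕ):ℝ))) = H (n+1-(j+1)) * (1/((j+1:ℕ):ℝ))
  rw [h1, h2]
  push_cast
  ring_nf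

lemma sumP (n : ℕ) : ∑ j ∈ range (n+1), H j * H (n-j)
    = ((n:ℝ)+1)*((H n)^2 - H2 n) - 2*n*H n + 2*n := by
  induction n with
  | zero => simp [H_zero, H2_zero]
  | succ n ih =>
    rw [Finset.sum_range_succ, Nat.sub_self, H_zero, mul_zero, add_zero]
    have hstep : ∀ j ∈ range (n+1), H j * H (n+1-j)
        = H j * H (n-j) + H j * (1/((n:ℝ)+1-j)) := by
      intro j hj
      simp only [Finset.mem_range] at hj
      have hjn : j ≤ n := by omega
      have h1 : n + 1 - j = (n - j) + 1 := by omega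
      have h2 : ((n-j:ℕ):ℝ) = (n:ℝ) - j := by push_cast [Nat.cast_sub hjn]; ring
      rw [h1, H_succ, h2]
      ring
    rw [Finset.sum_congr rfl hstep, Finset.sum_add_distrib, ih, sumRrange]
    have hne : (n:ℝ)+1 ≠ 0 := by positivity
    simp only [H_succ, H2_succ]
    push_cast
    field_simp
    ring

lemma sumPrefl (n : ℕ) : ∑ j ∈ range (n+1), (j:ℝ) * (H j * H (n-j))
    = (n:ℝ)/2 * (((n:ℝ)+1)*((H n)^2 - H2 n) - 2*n*H n + 2*n) := by
  have hrefl : ∑ j ∈ range (n+1), (j:ℝ) * (H j * H (n-j))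
      = ∑ j ∈ range (n+1), ((n:ℝ)-j) * (H (n-j) * H j) := by
    rw [← refl_range (fun j => (j:ℝ) * (H j * H (n-j))) n]
    apply Finset.sum_congr rfl
    intro j hj
    simp only [Finset.mem_range] at hj
    have hjn : j ≤ n := by omega
    have h2 : ((n-j:ℕ):ℝ) = (n:ℝ) - j := by push_cast [Nat.cast_sub hjn]; ring
    have h3 : n - (n - j) = j := by omega
    show ((n-j:ℕ):ℝ) * (H (n-j) * H (n-(n-j))) = _
    rw [h2, h3]
  have h2 : (∑ j ∈ range (n+1), (j:ℝ) * (H j * H (n-j)))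
      + (∑ j ∈ range (n+1), (j:ℝ) * (H j * H (n-j))) = (n:ℝ) * ∑ j ∈ range (n+1), H j * H (n-j) := by
    nth_rewrite 2 [hrefl]
    rw [← Finset.sum_add_distrib, Finset.mul_sum]
    apply Finset.sum_congr rfl
    intro j hj
    ring
  rw [sumP] at h2
  linarith

lemma sumjHr (n : ℕ) : ∑ j ∈ range (n+1), (j:ℝ) * H (n-j)
    = (n:ℝ)*((n:ℝ)+1)/2*H n - (n:ℝ)^2 + (n:ℝ)*((n:ℝ)-1)/4 := by
  have hrefl : ∑ j ∈ range (n+1), (j:ℝ) * H (n-j)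
      = ∑ j ∈ range (n+1), ((n:ℝ)-j) * H j := by
    rw [← refl_range (fun j => ((n:ℝ)-j) * H j) n]
    apply Finset.sum_congr rfl
    intro j hj
    simp only [Finset.mem_range] at hj
    have hjn : j ≤ n := by omega
    have h2 : ((n-j:ℕ):ℝ) = (n:ℝ) - j := by push_cast [Nat.cast_sub hjn]; ring
    show (j:ℝ) * H (n-j) = ((n:ℝ)-((n-j:ℕ):ℝ)) * H (n-j)
    rw [h2]
    ring
  rw [hrefl]
  have : ∀ j ∈ range (n+1), ((n:ℝ)-j) * H j = (n:ℝ) * H j - (j:ℝ) * H j := by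
    intro j hj; ring
  rw [Finset.sum_congr rfl this, Finset.sum_sub_distrib, ← Finset.mul_sum, sumH, sumjH]
  ring

noncomputable def qg (n : ℕ) : ℝ := 2*((n:ℝ)+1)*H n - 4*n
noncomputable def qf (n : ℕ) : ℝ :=
  7*(n:ℝ)^2 - 4*((n:ℝ)+1)^2*H2 n - 2*((n:ℝ)+1)*H n + 13*(n:ℝ) + (qg n)^2

lemma qg_zero : qg 0 = 0 := by simp [qg, H_zero]
lemma qf_zero : qf 0 = 0 := by simp [qf, qg_zero, H_zero, H2_zero]
lemma qg_succ (k : ℕ) : qg (k+1) = qg k + 2*H (k+1) - 2 := by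
  rw [qg, qg, H_succ]
  have : ((k:ℝ)+1) ≠ 0 := by positivity
  push_cast
  field_simp
  ring

lemma sumA (n : ℕ) : ∑ j ∈ range n, qg j = (n:ℝ)*((n:ℝ)+1)*H n - (n:ℝ)*(5*(n:ℝ)-1)/2 := by
  induction n with
  | zero => simp
  | succ n ih =>
    rw [Finset.sum_range_succ, ih, qg, H_succ]
    have : ((n:ℝ)+1) ≠ 0 := by positivity
    push_cast
    field_simp
    ring

lemma sumW (n : ℕ) : ∑ j ∈ range n, qg j * H (n-j)
    = ((n:ℝ)+2)*(((n:ℝ)+1)*((H n)^2 - H2 n) - 2*n*H n + 2*n)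
      - 4*((n:ℝ)*((n:ℝ)+1)/2*H n - (n:ℝ)^2 + (n:ℝ)*((n:ℝ)-1)/4) := by
  have hext : ∑ j ∈ range n, qg j * H (n-j) = ∑ j ∈ range (n+1), qg j * H (n-j) := by
    rw [Finset.sum_range_succ, Nat.sub_self, H_zero, mul_zero, add_zero]
  rw [hext]
  have hterm : ∀ j ∈ range (n+1), qg j * H (n-j)
      = 2*((j:ℝ)*(H j * H (n-j))) + 2*(H j * H (n-j)) - 4*((j:ℝ)*H (n-j)) := by
    intro j hj
    rw [qg]
    ring
  rw [Finset.sum_congr rfl hterm]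
  rw [Finset.sum_sub_distrib, Finset.sum_add_distrib, ← Finset.mul_sum, ← Finset.mul_sum,
    ← Finset.mul_sum, sumPrefl, sumP, sumjHr]
  ring

lemma sumGdiff (n : ℕ) : ∑ j ∈ range (n+1), qg j * qg (n-j)
    = (∑ j ∈ range n, qg j * qg (n-1-j)) + 2*(∑ j ∈ range n, qg j * H (n-j))
      - 2*(∑ j ∈ range n, qg j) := by
  rw [Finset.sum_range_succ, Nat.sub_self, qg_zero, mul_zero, add_zero]
  have hterm : ∀ j ∈ range n, qg j * qg (n-j)
      = qg j * qg (n-1-j) + 2*(qg j * H (n-j)) - 2*qg j := by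
    intro j hj
    simp only [Finset.mem_range] at hj
    have h1 : n - j = (n-1-j) + 1 := by omega
    rw [h1, qg_succ, ← h1]
    ring
  rw [Finset.sum_congr rfl hterm, Finset.sum_sub_distrib, Finset.sum_add_distrib,
    ← Finset.mul_sum, ← Finset.mul_sum]

lemma sumG (n : ℕ) : ∑ j ∈ range n, qg j * qg (n-1-j)
    = (2/3)*(n:ℝ)*((n:ℝ)+1)*((n:ℝ)+2)*((H n)^2 - H2 n)
      + (-(34:ℝ)/9*(n:ℝ)^3 - 14/3*(n:ℝ)^2 + 4/9*(n:ℝ))*H n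
      + 169/27*(n:ℝ)^3 + 11/9*(n:ℝ)^2 + 14/27*(n:ℝ) := by
  induction n with
  | zero => simp
  | succ n ih =>
    have h := sumGdiff n
    have hsimp : ∀ j ∈ range (n+1), qg j * qg (n+1-1-j) = qg j * qg (n-j) := by
      intro j hj
      norm_num
    rw [Finset.sum_congr rfl hsimp, h, ih, sumW, sumA, H_succ, H2_succ]
    have : ((n:ℝ)+1) ≠ 0 := by positivity
    push_cast
    field_simp
    ring

lemma sumB (n : ℕ) : ∑ j ∈ range n, qf j
    = (2/3)*(n:ℝ)*((n:ℝ)+1)*(2*(n:ℝ)+1)*((H n)^2 - H2 n)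
      + (-(56:ℝ)/9*(n:ℝ)^3 - 13/3*(n:ℝ)^2 + 5/9*(n:ℝ))*H n
      + 263/27*(n:ℝ)^3 + 5/18*(n:ℝ)^2 - 1/54*(n:ℝ) := by
  induction n with
  | zero => simp
  | succ n ih =>
    rw [Finset.sum_range_succ, ih, qf, qg, H_succ, H2_succ]
    have : ((n:ℝ)+1) ≠ 0 := by positivity
    push_cast
    field_simp
    ring

lemma mainF (n : ℕ) : (n:ℝ) * qf n
    = (n:ℝ)*((n:ℝ)-1)^2 + 2*(∑ j ∈ range n, qf j)
      + 2*(∑ j ∈ range n, qg j * qg (n-1-j)) + 4*((n:ℝ)-1)*(∑ j ∈ range n, qg j) := by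
  rw [sumB, sumG, sumA, qf, qg]
  ring

lemma meanId (n : ℕ) : (n:ℝ) * qg n = (n:ℝ)*((n:ℝ)-1) + 2*(∑ j ∈ range n, qg j) := by
  rw [sumA, qg]
  ring

def M (n : ℕ) : ℕ := n*(n-1)/2

lemma M_double (n : ℕ) : 2 * M n = n * (n-1) := by
  have h : 2 ∣ n * (n-1) := by
    rcases Nat.even_or_odd n with h | h
    · exact Dvd.dvd.mul_right h.two_dvd _
    · have he : Even (n-1) := Nat.Odd.sub_odd h odd_one
      exact Dvd.dvd.mul_left he.two_dvd _
  rw [M, Nat.mul_div_cancel' h]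

lemma M_key (a b : ℕ) : M a + M b + (a + b) ≤ M (a+b+1) := by
  have ha : a*(a-1) + a ≤ a*a := by
    rcases a with _|k
    · simp
    · simp only [Nat.add_sub_cancel]
      calc (k+1)*k + (k+1) = (k+1)*(k+1) := (Nat.mul_succ (k+1) k).symm
        _ ≤ (k+1)*(k+1) := le_refl _
  have hb : b*(b-1) + b ≤ b*b := by
    rcases b with _|k
    · simp
    · simp only [Nat.add_sub_cancel]
      calc (k+1)*k + (k+1) = (k+1)*(k+1) := (Nat.mul_succ (k+1) k).symm
        _ ≤ (k+1)*(k+1) := le_refl _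
  have h1 := M_double a
  have h2 := M_double b
  have h3 := M_double (a+b+1)
  have h4 : (a+b+1) * ((a+b+1)-1) = (a+b)*(a+b) + (a+b) := by
    simp only [Nat.add_sub_cancel]
    rw [Nat.succ_mul]
  have h5 : a*a + b*b ≤ (a+b)*(a+b) := by nlinarith
  omega

lemma psupp (p : ℕ → ℕ → ℝ)
    (h0 : ∀ k, p 0 k = if k = 0 then 1 else 0)
    (hrec : ∀ n, 1 ≤ n → ∀ k, p n k =
      (1/(n:ℝ)) * ∑ m ∈ Icc 1 n, ∑ j ∈ range (k+1),
        (if j + (n-1) ≤ k then p (m-1) j * p (n-m) (k - (n-1) - j) else 0)) :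
    ∀ n k, M n < k → p n k = 0 := by
  intro n
  induction n using Nat.strong_induction_on with
  | _ n ih =>
    intro k hk
    rcases Nat.eq_zero_or_pos n with rfl | hn
    · have hk0 : k ≠ 0 := by
        intro h; rw [h] at hk; simp [M] at hk
      rw [h0, if_neg hk0]
    · rw [hrec n hn k]
      have hz : ∀ m ∈ Icc 1 n, (∑ j ∈ range (k+1),
          (if j + (n-1) ≤ k then p (m-1) j * p (n-m) (k - (n-1) - j) else 0)) = 0 := by
        intro m hm
        simp only [Finset.mem_Icc] at hm
        apply Finset.sum_eq_zero
        intro j hj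
        simp only [Finset.mem_range] at hj
        split_ifs with hij
        · by_cases hjM : M (m-1) < j
          · rw [ih (m-1) (by omega) j hjM, zero_mul]
          · push_neg at hjM
            have hkey := M_key (m-1) (n-m)
            have heq : (m-1) + (n-m) + 1 = n := by omega
            rw [heq] at hkey
            have h5 : M (n-m) < k - (n-1) - j := by omega
            rw [ih (n-m) (by omega) _ h5, mul_zero]
        · rfl
      rw [Finset.sum_congr rfl hz, Finset.sum_const_zero, mul_zero]

lemma ptransfer (p : ℕ → ℕ → ℝ)
    (h0 : ∀ k, p 0 k = if k = 0 then 1 else 0)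
    (hrec : ∀ n, 1 ≤ n → ∀ k, p n k =
      (1/(n:ℝ)) * ∑ m ∈ Icc 1 n, ∑ j ∈ range (k+1),
        (if j + (n-1) ≤ k then p (m-1) j * p (n-m) (k - (n-1) - j) else 0))
    (n : ℕ) (hn : 1 ≤ n) (F : ℕ → ℝ) :
    ∑ k ∈ range (M n + 1), F k * p n k
    = (1/(n:ℝ)) * ∑ m ∈ Icc 1 n, ∑ j ∈ range (M n + 1), ∑ l ∈ range (M n + 1),
        p (m-1) j * p (n-m) l * F (j + l + (n-1)) := by
  have hsupp := psupp p h0 hrec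
  set K := M n + 1 with hK
  have step1 : ∀ k ∈ range K, F k * p n k
      = (1/(n:ℝ)) * ∑ m ∈ Icc 1 n, ∑ j ∈ range (k+1),
          (if j + (n-1) ≤ k then p (m-1) j * p (n-m) (k - (n-1) - j) * F k else 0) := by
    intro k hk
    rw [hrec n hn k, mul_comm (F k), mul_assoc]
    congr 1
    rw [Finset.sum_mul]
    apply Finset.sum_congr rfl
    intro m hm
    rw [Finset.sum_mul]
    apply Finset.sum_congr rfl
    intro j hj
    rw [ite_mul, zero_mul]
  rw [Finset.sum_congr rfl step1, ← Finset.mul_sum, Finset.sum_comm]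
  congr 1
  apply Finset.sum_congr rfl
  intro m hm
  simp only [Finset.mem_Icc] at hm
  have hMkey := M_key (m-1) (n-m)
  have heq : (m-1) + (n-m) + 1 = n := by omega
  rw [heq] at hMkey
  -- extend inner j-range to K
  have step2 : ∀ k ∈ range K, (∑ j ∈ range (k+1),
      (if j + (n-1) ≤ k then p (m-1) j * p (n-m) (k - (n-1) - j) * F k else 0))
      = ∑ j ∈ range K, (if j + (n-1) ≤ k then p (m-1) j * p (n-m) (k - (n-1) - j) * F k else 0) := by
    intro k hk
    simp only [Finset.mem_range] at hk
    apply Finset.sum_subset (Finset.range_subset_range.mpr (by omega))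
    intro j hj hj2
    simp only [Finset.mem_range] at hj hj2
    rw [if_neg (by omega)]
  rw [Finset.sum_congr rfl step2, Finset.sum_comm]
  apply Finset.sum_congr rfl
  intro j hj
  simp only [Finset.mem_range] at hj
  by_cases hjb : K ≤ j + (n-1)
  · -- all conditions false on the left; p (m-1) j = 0 on the right
    have hpj : p (m-1) j = 0 := by
      apply hsupp
      omega
    rw [Finset.sum_eq_zero, Finset.sum_eq_zero]
    · intro l hl; rw [hpj, zero_mul, zero_mul]
    · intro k hk
      simp only [Finset.mem_range] at hk
      rw [if_neg (by omega)]
  · push_neg at hjb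
    set a := j + (n-1) with ha
    have hfil : (range K).filter (fun k => a ≤ k) = Ico a K := by
      ext x
      simp only [Finset.mem_filter, Finset.mem_range, Finset.mem_Ico]
      omega
    rw [← Finset.sum_filter, hfil, Finset.sum_Ico_eq_sum_range]
    have step3 : ∀ l ∈ range (K - a), p (m-1) j * p (n-m) (a + l - (n-1) - j) * F (a + l)
        = p (m-1) j * p (n-m) l * F (j + l + (n-1)) := by
      intro l hl
      have h1 : a + l - (n-1) - j = l := by omega
      have h2 : a + l = j + l + (n-1) := by omega
      rw [h1, h2]
    rw [Finset.sum_congr rfl step3]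
    apply Finset.sum_subset (Finset.range_subset_range.mpr (by omega))
    intro l hl hl2
    simp only [Finset.mem_range] at hl hl2
    by_cases hjM : M (m-1) < j
    · rw [hsupp _ _ hjM, zero_mul, zero_mul]
    · push_neg at hjM
      have hlM : M (n-m) < l := by omega
      rw [hsupp _ _ hlM, mul_zero, zero_mul]

lemma M_mono {a b : ℕ} (h : a ≤ b) : M a ≤ M b :=
  Nat.div_le_div_right (Nat.mul_le_mul h (by omega))

lemma M_zero : M 0 = 0 := rfl

section moments
variable (p : ℕ → ℕ → ℝ)
    (h0 : ∀ k, p 0 k = if k = 0 then 1 else 0)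
    (hrec : ∀ n, 1 ≤ n → ∀ k, p n k =
      (1/(n:ℝ)) * ∑ m ∈ Icc 1 n, ∑ j ∈ range (k+1),
        (if j + (n-1) ≤ k then p (m-1) j * p (n-m) (k - (n-1) - j) else 0))

include h0 hrec

lemma ptrunc (q : ℕ → ℝ) (n N : ℕ) (hN : M n + 1 ≤ N) :
    ∑ k ∈ range N, q k * p n k = ∑ k ∈ range (M n + 1), q k * p n k := by
  symm
  apply Finset.sum_subset (Finset.range_subset_range.mpr hN)
  intro k hk hk2
  simp only [Finset.mem_range] at hk hk2
  rw [psupp p h0 hrec n k (by omega), mul_zero]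

lemma pmass : ∀ n, ∑ k ∈ range (M n + 1), p n k = 1 := by
  intro n
  induction n using Nat.strong_induction_on with
  | _ n ih =>
    rcases Nat.eq_zero_or_pos n with rfl | hn
    · simp [M_zero, h0]
    · have h1 : ∑ k ∈ range (M n + 1), p n k
          = ∑ k ∈ range (M n + 1), (fun _ : ℕ => (1:ℝ)) k * p n k := by
        simp
      rw [h1, ptransfer p h0 hrec n hn]
      have h2 : ∀ m ∈ Icc 1 n, ∑ j ∈ range (M n + 1), ∑ l ∈ range (M n + 1),
          p (m-1) j * p (n-m) l * 1 = 1 := by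
        intro m hm
        simp only [Finset.mem_Icc] at hm
        have hj : ∑ j ∈ range (M n + 1), p (m-1) j = 1 := by
          have := ptrunc p h0 hrec (fun _ => (1:ℝ)) (m-1) (M n + 1)
            (by have := M_mono (show m-1 ≤ n by omega); omega)
          simp only [one_mul] at this
          rw [this, ih (m-1) (by omega)]
        have hl : ∑ l ∈ range (M n + 1), p (n-m) l = 1 := by
          have := ptrunc p h0 hrec (fun _ => (1:ℝ)) (n-m) (M n + 1)
            (by have := M_mono (show n-m ≤ n by omega); omega)
          simp only [one_mul] at this
          rw [this, ih (n-m) (by omega)]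
        calc ∑ j ∈ range (M n + 1), ∑ l ∈ range (M n + 1), p (m-1) j * p (n-m) l * 1
            = ∑ j ∈ range (M n + 1), p (m-1) j * ∑ l ∈ range (M n + 1), p (n-m) l := by
              apply Finset.sum_congr rfl
              intro j hjm
              rw [Finset.mul_sum]
              apply Finset.sum_congr rfl
              intro l hl2
              ring
          _ = 1 := by rw [hl]; simp [hj]
      rw [Finset.sum_congr rfl h2, Finset.sum_const]
      simp only [Nat.card_Icc, Nat.add_sub_cancel, nsmul_eq_mul, mul_one]
      field_simp
end moments

lemma rindex1 (G : ℕ → ℝ) (n : ℕ) : ∑ m ∈ Icc 1 n, G (m-1) = ∑ j ∈ range n, G j := by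
  rw [icc_to_range (fun m => G (m-1))]
  simp

lemma rindex2 (G : ℕ → ℝ) (n : ℕ) : ∑ m ∈ Icc 1 n, G (n-m) = ∑ j ∈ range n, G j := by
  rw [icc_to_range (fun m => G (n-m))]
  have h : ∀ j ∈ range n, G (n - (j+1)) = G (n-1-j) := by
    intro j hj; congr 1; omega
  rw [Finset.sum_congr rfl h, Finset.sum_range_reflect]

lemma rindexG (n : ℕ) : ∑ m ∈ Icc 1 n, qg (m-1) * qg (n-m) = ∑ j ∈ range n, qg j * qg (n-1-j) := by
  rw [icc_to_range (fun m => qg (m-1) * qg (n-m))]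
  apply Finset.sum_congr rfl
  intro j hj
  show qg (j+1-1) * qg (n-(j+1)) = _
  congr 2 <;> omega

section moments2
variable (p : ℕ → ℕ → ℝ)
    (h0 : ∀ k, p 0 k = if k = 0 then 1 else 0)
    (hrec : ∀ n, 1 ≤ n → ∀ k, p n k =
      (1/(n:ℝ)) * ∑ m ∈ Icc 1 n, ∑ j ∈ range (k+1),
        (if j + (n-1) ≤ k then p (m-1) j * p (n-m) (k - (n-1) - j) else 0))

include h0 hrec

lemma pmassK (m' n : ℕ) (h : m' ≤ n) : ∑ j ∈ range (M n + 1), p m' j = 1 := by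
  have ht := ptrunc p h0 hrec (fun _ => (1:ℝ)) m' (M n + 1) (by have := M_mono h; omega)
  simp only [one_mul] at ht
  rw [ht, pmass p h0 hrec]

lemma pmean : ∀ n, ∑ k ∈ range (M n + 1), (k:ℝ) * p n k = qg n := by
  intro n
  induction n using Nat.strong_induction_on with
  | _ n ih =>
    rcases Nat.eq_zero_or_pos n with rfl | hn
    · simp [M_zero, qg_zero]
    · rw [ptransfer p h0 hrec n hn]
      have hc : ∀ j l : ℕ, ((j + l + (n-1) : ℕ):ℝ) = (j:ℝ) + (l:ℝ) + ((n:ℝ)-1) := by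
        intro j l
        push_cast [Nat.cast_sub hn]
        ring
      have hm : ∀ m ∈ Icc 1 n, ∑ j ∈ range (M n + 1), ∑ l ∈ range (M n + 1),
          p (m-1) j * p (n-m) l * ((j + l + (n-1) : ℕ):ℝ)
          = qg (m-1) + qg (n-m) + ((n:ℝ)-1) := by
        intro m hm
        simp only [Finset.mem_Icc] at hm
        have hmb : ∑ l ∈ range (M n + 1), p (n-m) l = 1 := pmassK p h0 hrec _ _ (by omega)
        have hma : ∑ j ∈ range (M n + 1), p (m-1) j = 1 := pmassK p h0 hrec _ _ (by omega)
        have hμb : ∑ l ∈ range (M n + 1), (l:ℝ) * p (n-m) l = qg (n-m) := by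
          rw [ptrunc p h0 hrec (fun l => (l:ℝ)) (n-m) (M n + 1)
            (by have := M_mono (show n-m ≤ n by omega); omega), ih (n-m) (by omega)]
        have hμa : ∑ j ∈ range (M n + 1), (j:ℝ) * p (m-1) j = qg (m-1) := by
          rw [ptrunc p h0 hrec (fun j => (j:ℝ)) (m-1) (M n + 1)
            (by have := M_mono (show m-1 ≤ n by omega); omega), ih (m-1) (by omega)]
        have hinner : ∀ j ∈ range (M n + 1), ∑ l ∈ range (M n + 1),
            p (m-1) j * p (n-m) l * ((j + l + (n-1) : ℕ):ℝ)
            = ((j:ℝ) + ((n:ℝ)-1) + qg (n-m)) * p (m-1) j := by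
          intro j hj
          have : ∀ l ∈ range (M n + 1), p (m-1) j * p (n-m) l * ((j + l + (n-1) : ℕ):ℝ)
              = ((j:ℝ) + ((n:ℝ)-1)) * p (m-1) j * p (n-m) l
                + p (m-1) j * ((l:ℝ) * p (n-m) l) := by
            intro l hl
            rw [hc j l]
            ring
          rw [Finset.sum_congr rfl this, Finset.sum_add_distrib, ← Finset.mul_sum,
            ← Finset.mul_sum, hmb, hμb]
          ring
        rw [Finset.sum_congr rfl hinner]
        have : ∀ j ∈ range (M n + 1), ((j:ℝ) + ((n:ℝ)-1) + qg (n-m)) * p (m-1) j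
            = (j:ℝ) * p (m-1) j + (((n:ℝ)-1) + qg (n-m)) * p (m-1) j := by
          intro j hj; ring
        rw [Finset.sum_congr rfl this, Finset.sum_add_distrib, ← Finset.mul_sum, hma, hμa]
        ring
      rw [Finset.sum_congr rfl hm]
      rw [Finset.sum_add_distrib, Finset.sum_add_distrib, rindex1 qg n, rindex2 qg n,
        Finset.sum_const]
      simp only [Nat.card_Icc, Nat.add_sub_cancel, nsmul_eq_mul]
      have hn0 : (n:ℝ) ≠ 0 := Nat.cast_ne_zero.mpr (by omega)
      have hmid := meanId n
      field_simp
      linarith [sumA n]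
end moments2

section moments3
variable (p : ℕ → ℕ → ℝ)
    (h0 : ∀ k, p 0 k = if k = 0 then 1 else 0)
    (hrec : ∀ n, 1 ≤ n → ∀ k, p n k =
      (1/(n:ℝ)) * ∑ m ∈ Icc 1 n, ∑ j ∈ range (k+1),
        (if j + (n-1) ≤ k then p (m-1) j * p (n-m) (k - (n-1) - j) else 0))

include h0 hrec

lemma psec : ∀ n, ∑ k ∈ range (M n + 1), (k:ℝ)^2 * p n k = qf n := by
  intro n
  induction n using Nat.strong_induction_on with
  | _ n ih =>
    rcases Nat.eq_zero_or_pos n with rfl | hn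
    · simp [M_zero, qf_zero]
    · rw [ptransfer p h0 hrec n hn]
      have hc : ∀ j l : ℕ, ((j + l + (n-1) : ℕ):ℝ) = (j:ℝ) + (l:ℝ) + ((n:ℝ)-1) := by
        intro j l
        push_cast [Nat.cast_sub hn]
        ring
      set c : ℝ := (n:ℝ) - 1 with hcdef
      have hm : ∀ m ∈ Icc 1 n, ∑ j ∈ range (M n + 1), ∑ l ∈ range (M n + 1),
          p (m-1) j * p (n-m) l * (((j + l + (n-1) : ℕ):ℝ))^2
          = qf (m-1) + qf (n-m) + 2*c*(qg (m-1) + qg (n-m)) + 2*qg (m-1)*qg (n-m) + c^2 := by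
        intro m hm
        simp only [Finset.mem_Icc] at hm
        have hmb : ∑ l ∈ range (M n + 1), p (n-m) l = 1 := pmassK p h0 hrec _ _ (by omega)
        have hma : ∑ j ∈ range (M n + 1), p (m-1) j = 1 := pmassK p h0 hrec _ _ (by omega)
        have hμb : ∑ l ∈ range (M n + 1), (l:ℝ) * p (n-m) l = qg (n-m) := by
          rw [ptrunc p h0 hrec (fun l => (l:ℝ)) (n-m) (M n + 1)
            (by have := M_mono (show n-m ≤ n by omega); omega), pmean p h0 hrec]
        have hμa : ∑ j ∈ range (M n + 1), (j:ℝ) * p (m-1) j = qg (m-1) := by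
          rw [ptrunc p h0 hrec (fun j => (j:ℝ)) (m-1) (M n + 1)
            (by have := M_mono (show m-1 ≤ n by omega); omega), pmean p h0 hrec]
        have hsb : ∑ l ∈ range (M n + 1), (l:ℝ)^2 * p (n-m) l = qf (n-m) := by
          rw [ptrunc p h0 hrec (fun l => (l:ℝ)^2) (n-m) (M n + 1)
            (by have := M_mono (show n-m ≤ n by omega); omega), ih (n-m) (by omega)]
        have hsa : ∑ j ∈ range (M n + 1), (j:ℝ)^2 * p (m-1) j = qf (m-1) := by
          rw [ptrunc p h0 hrec (fun j => (j:ℝ)^2) (m-1) (M n + 1)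
            (by have := M_mono (show m-1 ≤ n by omega); omega), ih (m-1) (by omega)]
        have hinner : ∀ j ∈ range (M n + 1), ∑ l ∈ range (M n + 1),
            p (m-1) j * p (n-m) l * (((j + l + (n-1) : ℕ):ℝ))^2
            = (j:ℝ)^2 * p (m-1) j + (2*c + 2*qg (n-m)) * ((j:ℝ) * p (m-1) j)
              + (c^2 + 2*c*qg (n-m) + qf (n-m)) * p (m-1) j := by
          intro j hj
          have hterm : ∀ l ∈ range (M n + 1), p (m-1) j * p (n-m) l * (((j + l + (n-1) : ℕ):ℝ))^2
              = ((j:ℝ)+c)^2 * p (m-1) j * p (n-m) l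
                + (2*((j:ℝ)+c) * p (m-1) j) * ((l:ℝ) * p (n-m) l)
                + p (m-1) j * ((l:ℝ)^2 * p (n-m) l) := by
            intro l hl
            rw [hc j l]
            ring
          rw [Finset.sum_congr rfl hterm, Finset.sum_add_distrib, Finset.sum_add_distrib,
            ← Finset.mul_sum, ← Finset.mul_sum, ← Finset.mul_sum, hmb, hμb, hsb]
          ring
        rw [Finset.sum_congr rfl hinner, Finset.sum_add_distrib, Finset.sum_add_distrib,
          ← Finset.mul_sum, ← Finset.mul_sum, hma, hμa, hsa]
        ring
      rw [Finset.sum_congr rfl hm]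
      rw [Finset.sum_add_distrib, Finset.sum_add_distrib, Finset.sum_add_distrib,
        Finset.sum_add_distrib, rindex1 qf n, rindex2 qf n, Finset.sum_const]
      have h2c : ∑ m ∈ Icc 1 n, 2*c*(qg (m-1) + qg (n-m))
          = 4*c*(∑ j ∈ range n, qg j) := by
        have : ∀ m ∈ Icc 1 n, 2*c*(qg (m-1) + qg (n-m))
            = 2*c*qg (m-1) + 2*c*qg (n-m) := by intro m hm; ring
        rw [Finset.sum_congr rfl this, Finset.sum_add_distrib, ← Finset.mul_sum, ← Finset.mul_sum,
          rindex1 qg n, rindex2 qg n]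
        ring
      have hG : ∑ m ∈ Icc 1 n, 2*qg (m-1)*qg (n-m)
          = 2*(∑ j ∈ range n, qg j * qg (n-1-j)) := by
        rw [← rindexG n, Finset.mul_sum]
        apply Finset.sum_congr rfl
        intro m hm
        ring
      rw [h2c, hG]
      simp only [Nat.card_Icc, Nat.add_sub_cancel, nsmul_eq_mul]
      have hn0 : (n:ℝ) ≠ 0 := Nat.cast_ne_zero.mpr (by omega)
      have hmf := mainF n
      rw [hcdef]
      field_simp
      linarith [mainF n]
end moments3

theorem stmt17 (p : ℕ → ℕ → ℝ)
    (h0 : ∀ k, p 0 k = if k = 0 then 1 else 0)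
    (hrec : ∀ n, 1 ≤ n → ∀ k, p n k =
      (1/(n:ℝ)) * ∑ m ∈ Icc 1 n, ∑ j ∈ range (k+1),
        (if j + (n-1) ≤ k then p (m-1) j * p (n-m) (k - (n-1) - j) else 0))
    (n : ℕ) (hn : 1 ≤ n) :
    (∑ k ∈ range (n*(n-1)/2 + 1), (k:ℝ)^2 * p n k)
      - (∑ k ∈ range (n*(n-1)/2 + 1), (k:ℝ) * p n k)^2
    = 7*(n:ℝ)^2 - 4*((n:ℝ)+1)^2*H2 n - 2*((n:ℝ)+1)*H n + 13*(n:ℝ) := by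
  have hM : M n = n*(n-1)/2 := rfl
  rw [← hM]
  rw [psec p h0 hrec n, pmean p h0 hrec n, qf]
  ring
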